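/- Let ψ : ℝⁿ → ℝ be a convex function with ∫ e^{-ψ} = 1 and barycenter of e^{-ψ(x)}dx at the origin, so that ψ(0) ≤ n + inf ψ. Define K(ψ) = {x : ψ(x) ≤ 2n + inf ψ} and let ‖x‖_ψ be the Minkowski functional of K(ψ). Then for all x ∈ ℝⁿ, ψ(x) ≥ n‖x‖_ψ + ψ(0) − 2n. -/

import Mathlib

open MeasureTheory Real Metric

theorem stmt_0 (n : ℕ) (ψ : EuclideanSpace ℝ (Fin n) → ℝ)
    (hconv : ConvexOn ℝ Set.univ ψ)
    (hint : ∫ x, Real.exp (-ψ x) = 1)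
    (hbar : ∫ x, Real.exp (-ψ x) • x = (0 : EuclideanSpace ℝ (Fin n)))
    (hfrad : ψ 0 ≤ n + ⨅ y, ψ y) (x : EuclideanSpace ℝ (Fin n)) :
    ψ x ≥ n * gauge {y | ψ y ≤ 2 * n + ⨅ z, ψ z} x + ψ 0 - 2 * n := by
  classical
  have hInt : Integrable (fun x => Real.exp (-ψ x)) := by
    by_contra h
    rw [integral_undef h] at hint; norm_num at hint
  have hcont : Continuous ψ := by
    rw [← continuousOn_univ]
    exact hconv.continuousOn isOpen_univ
  obtain ⟨z, hz, hM⟩ := (isCompact_closedBall (0 : EuclideanSpace ℝ (Fin n)) 2).exists_isMaxOn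
    ⟨0, by simp⟩ hcont.continuousOn
  set M := ψ z with hMdef
  set V := (volume (ball (0 : EuclideanSpace ℝ (Fin n)) 1)).toReal with hVdef
  have hVpos : 0 < V := by
    refine ENNReal.toReal_pos (ne_of_gt (measure_ball_pos _ _ one_pos)) ?_
    exact (measure_ball_lt_top).ne
  have hlb : ∀ y, 2 * Real.log V - M ≤ ψ y := by
    intro y
    have hkey : ∀ u ∈ ball ((2 : ℝ)⁻¹ • y) 1, Real.exp (-(ψ y + M) / 2) ≤ Real.exp (-ψ u) := by
      intro u hu
      have hw : ((2 : ℝ) • u - y) ∈ closedBall (0 : EuclideanSpace ℝ (Fin n)) 2 := by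
        rw [mem_closedBall, dist_zero_right]
        have : (2 : ℝ) • u - y = (2 : ℝ) • (u - (2 : ℝ)⁻¹ • y) := by
          rw [smul_sub, smul_inv_smul₀ (by norm_num)]
        rw [this, norm_smul]
        have := mem_ball_iff_norm.mp hu
        simp only [Real.norm_ofNat]
        nlinarith [norm_nonneg (u - (2:ℝ)⁻¹ • y)]
      have hup : ψ u ≤ (ψ y + M) / 2 := by
        have hc := hconv.2 (Set.mem_univ y) (Set.mem_univ ((2 : ℝ) • u - y))
          (by norm_num : (0:ℝ) ≤ 1/2) (by norm_num : (0:ℝ) ≤ 1/2) (by norm_num)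
        have he : (1/2 : ℝ) • y + (1/2 : ℝ) • ((2 : ℝ) • u - y) = u := by
          module
        rw [he] at hc
        simp only [smul_eq_mul] at hc
        have hMw : ψ ((2 : ℝ) • u - y) ≤ M := hM hw
        linarith
      exact Real.exp_le_exp.mpr (by linarith)
    have h1 : Real.exp (-(ψ y + M) / 2) * V ≤ 1 := by
      have hms : MeasurableSet (ball ((2 : ℝ)⁻¹ • y) 1) := measurableSet_ball
      have hfin : volume (ball ((2 : ℝ)⁻¹ • y) 1) ≠ ⊤ := measure_ball_lt_top.ne
      have hle := setIntegral_ge_of_const_le hms hfin hkey (hInt.integrableOn)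
      have hle2 : ∫ u in ball ((2 : ℝ)⁻¹ • y) 1, Real.exp (-ψ u) ≤ 1 := by
        rw [← hint]
        exact setIntegral_le_integral hInt (Filter.Eventually.of_forall fun u => (Real.exp_pos _).le)
      have hvol : (volume (ball ((2 : ℝ)⁻¹ • y) 1)).toReal = V := by
        rw [hVdef, Measure.addHaar_ball_center]
      rw [measureReal_def, smul_eq_mul, hvol] at hle
      linarith
    have h2 : Real.exp (-(ψ y + M) / 2) ≤ 1 / V := (le_div_iff₀ hVpos).mpr h1
    have h3 : -(ψ y + M) / 2 ≤ Real.log (1 / V) :=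
      (Real.le_log_iff_exp_le (by positivity)).mpr h2
    rw [one_div, Real.log_inv] at h3
    linarith
  have hbdd : BddBelow (Set.range ψ) := ⟨2 * Real.log V - M, by
    rintro v ⟨y, rfl⟩; exact hlb y⟩
  have hm : ∀ y, (⨅ z, ψ z) ≤ ψ y := fun y => ciInf_le hbdd y
  set m := ⨅ z : EuclideanSpace ℝ (Fin n), ψ z with hmdef
  set K := {y : EuclideanSpace ℝ (Fin n) | ψ y ≤ 2 * n + m} with hKdef
  set g := gauge K x with hgdef
  have hg0 : 0 ≤ g := gauge_nonneg x
  have hn0 : (0:ℝ) ≤ n := Nat.cast_nonneg n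
  by_cases hg1 : g ≤ 1
  · have h1 := hm x
    nlinarith
  · push_neg at hg1
    set lam := max ((1 + g) / 2) (g - 1) with hlamdef
    have hlam1 : 1 < lam := lt_of_lt_of_le (by linarith) (le_max_left _ _)
    have hlam0 : (0:ℝ) < lam := by linarith
    have hlamg : lam < g := max_lt (by linarith) (by linarith)
    have hlamge : g - 2 ≤ lam := le_trans (by linarith) (le_max_right _ _)
    have hpt : 2 * (n:ℝ) + m < ψ (lam⁻¹ • x) := by
      by_contra h
      push_neg at h
      have hmem : lam ∈ {r ∈ Set.Ioi (0:ℝ) | r⁻¹ • x ∈ K} := ⟨hlam0, h⟩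
      have hle : g ≤ lam := by
        rw [hgdef, gauge_def']
        exact csInf_le ⟨0, fun r hr => (le_of_lt hr.1)⟩ hmem
      linarith
    have hc := hconv.2 (Set.mem_univ x) (Set.mem_univ (0 : EuclideanSpace ℝ (Fin n)))
      (by positivity : (0:ℝ) ≤ lam⁻¹)
      (by rw [sub_nonneg]; exact inv_le_one_of_one_le₀ hlam1.le : (0:ℝ) ≤ 1 - lam⁻¹)
      (by ring)
    rw [smul_zero, add_zero] at hc
    have hmul : lam * (2 * n + m) < ψ x + (lam - 1) * ψ 0 := by
      have h5 := mul_lt_mul_of_pos_left (lt_of_lt_of_le hpt hc) hlam0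
      have hl : lam * (lam⁻¹ * ψ x + (1 - lam⁻¹) * ψ 0) = ψ x + (lam - 1) * ψ 0 := by
        field_simp
      simp only [smul_eq_mul] at h5
      rw [hl] at h5
      linarith
    nlinarith [mul_nonneg hlam0.le (by linarith : (0:ℝ) ≤ (n:ℝ) + m - ψ 0),
      mul_nonneg hn0 (by linarith : (0:ℝ) ≤ lam - (g - 2))]
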